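/- Fix μ ∈ P(X). Suppose there is a sub-probability measure λ on X with p(·|x,a,μ) ≥ λ setwise for all (x,a), and that the sub-stochastic kernel q(·|x,a,μ) := p(·|x,a,μ) − λ satisfies ∫_X w_max(y) q(dy|x,a,μ) ≤ α·w(x,a) for all (x,a), with α ∈ (0,1). Define R_μ u(x) := inf_{a∈A} [ c(x,a,μ) + ∫_X u(y) q(dy|x,a,μ) ]. Then for all continuous u, û : X → ℝ with finite w_max-norm, ‖R_μ u − R_μ û‖_{w_max} ≤ α·‖u − û‖_{w_max}; that is, R_μ is a contraction with modulus α with respect to the w_max-norm. -/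
import Mathlib


open MeasureTheory

noncomputable section

/-- Wasserstein-1 distance via Kantorovich–Rubinstein duality. -/
def W1 {X : Type*} [MeasurableSpace X] [MetricSpace X] (μ ν : Measure X) : ℝ :=
  sSup {r : ℝ | ∃ g : X → ℝ, LipschitzWith 1 g ∧ r = |∫ x, g x ∂μ - ∫ x, g x ∂ν|}

/-- The weighted sup norm `‖v‖_w` over `X × A`. -/
def wNorm {X : Type*} {d : ℕ} (A : Set (EuclideanSpace ℝ (Fin d)))
    (w v : X → EuclideanSpace ℝ (Fin d) → ℝ) : ℝ :=
  ⨆ q : X × ↥A, |v q.1 q.2.1| / w q.1 q.2.1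

/-- `Q_min(x) = inf_{a ∈ A} Q(x,a)`. -/
def minA {X : Type*} {d : ℕ} (A : Set (EuclideanSpace ℝ (Fin d)))
    (Q : X → EuclideanSpace ℝ (Fin d) → ℝ) (x : X) : ℝ :=
  ⨅ a : ↥A, Q x a.1

/-- `w_max(x) = sup_{a ∈ A} w(x,a)`. -/
def wmaxA {X : Type*} {d : ℕ} (A : Set (EuclideanSpace ℝ (Fin d)))
    (w : X → EuclideanSpace ℝ (Fin d) → ℝ) (x : X) : ℝ :=
  ⨆ a : ↥A, w x a.1

/-- The weighted sup norm `‖u‖_{w_max}` for functions on `X`. -/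
def wmaxNorm {X : Type*} {d : ℕ} (A : Set (EuclideanSpace ℝ (Fin d)))
    (w : X → EuclideanSpace ℝ (Fin d) → ℝ) (u : X → ℝ) : ℝ :=
  ⨆ x : X, |u x| / wmaxA A w x

lemma inf_sub_inf_abs_le {ι : Type*} [Nonempty ι] {f g : ι → ℝ} {c : ℝ}
    (hf : BddBelow (Set.range f)) (hg : BddBelow (Set.range g))
    (h : ∀ i, |f i - g i| ≤ c) : |(⨅ i, f i) - ⨅ i, g i| ≤ c := by
  have h1 : (⨅ i, f i) - c ≤ ⨅ i, g i := le_ciInf fun i => by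
    have h2 := abs_le.1 (h i); have h3 := ciInf_le hf i; linarith [h2.1, h2.2]
  have h2 : (⨅ i, g i) - c ≤ ⨅ i, f i := le_ciInf fun i => by
    have h2 := abs_le.1 (h i); have h3 := ciInf_le hg i; linarith [h2.1, h2.2]
  rw [abs_le]; constructor <;> linarith

/-- the average-cost operator `R_μ` is an `α`-contraction in the
`w_max`-weighted sup norm. -/
theorem statement19
    {X : Type*} [MeasurableSpace X] [MetricSpace X] [CompleteSpace X]
    [TopologicalSpace.SeparableSpace X] [BorelSpace X] {d : ℕ}
    (A : Set (EuclideanSpace ℝ (Fin d))) (hA : IsCompact A) (hAne : A.Nonempty)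
    (w : X → EuclideanSpace ℝ (Fin d) → ℝ)
    (hwcont : Continuous fun q : X × EuclideanSpace ℝ (Fin d) => w q.1 q.2)
    (hw1 : ∀ x, ∀ a ∈ A, 1 ≤ w x a)
    (p : X → EuclideanSpace ℝ (Fin d) → ProbabilityMeasure X → ProbabilityMeasure X)
    (c : X → EuclideanSpace ℝ (Fin d) → ProbabilityMeasure X → ℝ)
    (hc0 : ∀ x a μ, 0 ≤ c x a μ)
    (μ : ProbabilityMeasure X)
    (lam : Measure X) (hsub : lam Set.univ ≤ 1)
    (hminor : ∀ x, ∀ a ∈ A, lam ≤ (p x a μ : Measure X))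
    (α : ℝ) (hα : α ∈ Set.Ioo (0 : ℝ) 1)
    (hwint : ∀ x, ∀ a ∈ A, Integrable (wmaxA A w) ((p x a μ : Measure X) - lam))
    (hdrift : ∀ x, ∀ a ∈ A,
      ∫ y, wmaxA A w y ∂((p x a μ : Measure X) - lam) ≤ α * w x a)
    (u u' : X → ℝ) (hu : Continuous u) (hu' : Continuous u')
    (hufin : ∃ C : ℝ, ∀ x, |u x| ≤ C * wmaxA A w x)
    (hu'fin : ∃ C : ℝ, ∀ x, |u' x| ≤ C * wmaxA A w x) :
    wmaxNorm A w (fun x =>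
        (⨅ a : ↥A, (c x a.1 μ + ∫ y, u y ∂((p x a.1 μ : Measure X) - lam))) -
        (⨅ a : ↥A, (c x a.1 μ + ∫ y, u' y ∂((p x a.1 μ : Measure X) - lam))))
      ≤ α * wmaxNorm A w (fun x => u x - u' x) := by
  rcases isEmpty_or_nonempty X with hX | hX
  · have h0 : ∀ v : X → ℝ, wmaxNorm A w v = 0 := by
      intro v; rw [wmaxNorm]; exact Real.iSup_of_isEmpty _
    rw [h0, h0, mul_zero]
  obtain ⟨a0, ha0⟩ := hAne
  haveI : Nonempty ↥A := ⟨⟨a0, ha0⟩⟩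
  obtain ⟨C, hC⟩ := hufin
  obtain ⟨C', hC'⟩ := hu'fin
  have hwcontx : ∀ x, Continuous (w x) := fun x => hwcont.comp (Continuous.prodMk_right x)
  have hbdd : ∀ x, BddAbove (Set.range fun a : ↥A => w x a.1) := by
    intro x
    have h1 : BddAbove (w x '' A) := (hA.image (hwcontx x)).bddAbove
    rwa [Set.image_eq_range] at h1
  have hwmax_ge : ∀ x, ∀ a ∈ A, w x a ≤ wmaxA A w x := fun x a ha =>
    le_ciSup (hbdd x) (⟨a, ha⟩ : ↥A)
  have hwmax1 : ∀ x, 1 ≤ wmaxA A w x := fun x =>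
    (hw1 x a0 ha0).trans (hwmax_ge x a0 ha0)
  have hwmaxpos : ∀ x, 0 < wmaxA A w x := fun x => lt_of_lt_of_le one_pos (hwmax1 x)
  -- key integral estimate
  have key : ∀ (v : X → ℝ) (Cv : ℝ), Continuous v → (∀ y, |v y| ≤ Cv * wmaxA A w y) →
      ∀ x, ∀ a ∈ A, |∫ y, v y ∂((p x a μ : Measure X) - lam)| ≤ Cv * (α * w x a) := by
    intro v Cv hvc hvb x a ha
    obtain ⟨x0⟩ := hX
    have hC0 : 0 ≤ Cv := by
      have h1 := (abs_nonneg (v x0)).trans (hvb x0)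
      nlinarith [hwmaxpos x0]
    have hqw := hwint x a ha
    have hIv : Integrable v ((p x a μ : Measure X) - lam) :=
      (hqw.const_mul Cv).mono' hvc.aestronglyMeasurable
        (Filter.Eventually.of_forall fun y => by simpa [Real.norm_eq_abs] using hvb y)
    calc |∫ y, v y ∂((p x a μ : Measure X) - lam)|
        ≤ ∫ y, |v y| ∂((p x a μ : Measure X) - lam) := by
          simpa [Real.norm_eq_abs] using norm_integral_le_integral_norm (μ := (p x a μ : Measure X) - lam) v
      _ ≤ ∫ y, Cv * wmaxA A w y ∂((p x a μ : Measure X) - lam) :=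
          integral_mono hIv.abs (hqw.const_mul Cv) fun y => hvb y
      _ = Cv * ∫ y, wmaxA A w y ∂((p x a μ : Measure X) - lam) := integral_const_mul _ _
      _ ≤ Cv * (α * w x a) := mul_le_mul_of_nonneg_left (hdrift x a ha) hC0
  have hInt : ∀ (v : X → ℝ) (Cv : ℝ), Continuous v → (∀ y, |v y| ≤ Cv * wmaxA A w y) →
      ∀ x, ∀ a ∈ A, Integrable v ((p x a μ : Measure X) - lam) := by
    intro v Cv hvc hvb x a ha
    exact ((hwint x a ha).const_mul Cv).mono' hvc.aestronglyMeasurable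
        (Filter.Eventually.of_forall fun y => by simpa [Real.norm_eq_abs] using hvb y)
  have hC0 : 0 ≤ C := by
    obtain ⟨x0⟩ := hX
    have h1 := (abs_nonneg (u x0)).trans (hC x0)
    nlinarith [hwmaxpos x0]
  -- the weighted norm N of u - u'
  set N := wmaxNorm A w (fun x => u x - u' x) with hNdef
  have hNbdd : BddAbove (Set.range fun x : X => |u x - u' x| / wmaxA A w x) := by
    refine ⟨C + C', ?_⟩
    rintro r ⟨x, rfl⟩
    rw [div_le_iff₀ (hwmaxpos x)]
    calc |u x - u' x| ≤ |u x| + |u' x| := abs_sub _ _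
      _ ≤ C * wmaxA A w x + C' * wmaxA A w x := add_le_add (hC x) (hC' x)
      _ = (C + C') * wmaxA A w x := by ring
  have hN0 : 0 ≤ N := Real.iSup_nonneg fun x => div_nonneg (abs_nonneg _) (hwmaxpos x).le
  have hptw : ∀ y, |u y - u' y| ≤ N * wmaxA A w y := by
    intro y
    have h1 : |u y - u' y| / wmaxA A w y ≤ N := le_ciSup hNbdd y
    rwa [div_le_iff₀ (hwmaxpos y)] at h1
  -- per-x bound on difference of infima
  have hmain : ∀ x,
      |(⨅ a : ↥A, (c x a.1 μ + ∫ y, u y ∂((p x a.1 μ : Measure X) - lam))) -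
       (⨅ a : ↥A, (c x a.1 μ + ∫ y, u' y ∂((p x a.1 μ : Measure X) - lam)))|
        ≤ α * N * wmaxA A w x := by
    intro x
    have hbbl : ∀ (v : X → ℝ) (Cv : ℝ), Continuous v → (∀ y, |v y| ≤ Cv * wmaxA A w y) →
        0 ≤ Cv →
        BddBelow (Set.range fun a : ↥A =>
          c x a.1 μ + ∫ y, v y ∂((p x a.1 μ : Measure X) - lam)) := by
      intro v Cv hvc hvb hCv0
      refine ⟨-(Cv * (α * wmaxA A w x)), ?_⟩
      rintro r ⟨a, rfl⟩
      have h1 := key v Cv hvc hvb x a.1 a.2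
      have h2 := abs_le.1 h1
      have h3 : Cv * (α * w x a.1) ≤ Cv * (α * wmaxA A w x) :=
        mul_le_mul_of_nonneg_left
          (mul_le_mul_of_nonneg_left (hwmax_ge x a.1 a.2) hα.1.le) hCv0
      have h4 := hc0 x a.1 μ
      simp only
      linarith [h2.1]
    have hC'0 : 0 ≤ C' := by
      obtain ⟨x0⟩ := hX
      have h1 := (abs_nonneg (u' x0)).trans (hC' x0)
      nlinarith [hwmaxpos x0]
    refine inf_sub_inf_abs_le (hbbl u C hu hC hC0) (hbbl u' C' hu' hC' hC'0) ?_
    intro a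
    have hIu := hInt u C hu hC x a.1 a.2
    have hIu' := hInt u' C' hu' hC' x a.1 a.2
    have heq : (c x a.1 μ + ∫ y, u y ∂((p x a.1 μ : Measure X) - lam)) -
        (c x a.1 μ + ∫ y, u' y ∂((p x a.1 μ : Measure X) - lam)) =
        ∫ y, (u y - u' y) ∂((p x a.1 μ : Measure X) - lam) := by
      rw [integral_sub hIu hIu']; ring
    rw [heq]
    have h1 := key (fun y => u y - u' y) N (hu.sub hu') hptw x a.1 a.2
    have h2 : N * (α * w x a.1) ≤ α * N * wmaxA A w x := by
      have h3 : N * (α * w x a.1) ≤ N * (α * wmaxA A w x) :=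
        mul_le_mul_of_nonneg_left
          (mul_le_mul_of_nonneg_left (hwmax_ge x a.1 a.2) hα.1.le) hN0
      linarith [h3, (by ring : N * (α * wmaxA A w x) = α * N * wmaxA A w x)]
    exact h1.trans h2
  refine ciSup_le fun x => ?_
  rw [div_le_iff₀ (hwmaxpos x)]
  calc _ ≤ α * N * wmaxA A w x := hmain x
    _ = α * N * wmaxA A w x := rfl
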